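/- The 6-dimensional balanced shuffle-cube BSQ_6 is vertex-bipancyclic: for every vertex u of BSQ_6 and every even integer l with 4 ≤ l ≤ 64, there is a cycle of length l in BSQ_6 passing through u. -/

import Mathlib

/-- Vertices of the `n`-dimensional balanced shuffle-cube: all binary strings
of length `n` (encoded as functions `ℕ → Bool` vanishing from position `n` on). -/
def BSQVertex (n : ℕ) : Type :=
  {u : ℕ → Bool // ∀ i, n ≤ i → u i = false}

/-- The value, modulo 4, of the two-bit string `ab` (with `a` the more
significant bit). -/
def pairVal (a b : Bool) : ZMod 4 :=
  2 * (a.toNat : ZMod 4) + (b.toNat : ZMod 4)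

/-- The adjacency condition of the balanced shuffle-cube `BSQ_{4k+2}`
(parametrised by `k`).  For `k = 0` (i.e. `BSQ₂`, a 4-cycle) two strings are
adjacent iff they differ in exactly one of bits `0` and `1`.  For `n = 4k+6`,
two strings are adjacent iff either they lie in a common copy of `BSQ_{4k+2}`
(the top four bits agree) and are adjacent there, or they lie in different
copies, the last `n-4` bits agree, bits `u_{n-2}` and `v_{n-2}` differ,
`v_{n-1}v_{n-2} = u_{n-1}u_{n-2} ± 1 (mod 4)`, and
`v_{n-3}v_{n-4} = u_{n-3}u_{n-4} + (-1)^{u_{n-2}} (mod 4)` or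
`v_{n-3}v_{n-4} = u_{n-3}u_{n-4}`. -/
def bsqRel : ℕ → (ℕ → Bool) → (ℕ → Bool) → Prop
  | 0, u, v => ((u 0 = v 0) ↔ ¬ (u 1 = v 1))
  | k + 1, u, v =>
      ((∀ i, 4 * k + 2 ≤ i → i ≤ 4 * k + 5 → u i = v i) ∧ bsqRel k u v) ∨
      ((∀ i, i < 4 * k + 2 → u i = v i) ∧
        u (4 * k + 4) ≠ v (4 * k + 4) ∧
        (pairVal (v (4 * k + 5)) (v (4 * k + 4)) =
            pairVal (u (4 * k + 5)) (u (4 * k + 4)) + 1 ∨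
          pairVal (v (4 * k + 5)) (v (4 * k + 4)) =
            pairVal (u (4 * k + 5)) (u (4 * k + 4)) - 1) ∧
        (pairVal (v (4 * k + 3)) (v (4 * k + 2)) =
            pairVal (u (4 * k + 3)) (u (4 * k + 2)) +
              (if u (4 * k + 4) = true then -1 else 1) ∨
          pairVal (v (4 * k + 3)) (v (4 * k + 2)) =
            pairVal (u (4 * k + 3)) (u (4 * k + 2))))

/-- The `n`-dimensional balanced shuffle-cube `BSQ_n` (for `n ≡ 2 (mod 4)`,
so that `n = 4k+2` with `k = (n-2)/4`). -/
def BSQ (n : ℕ) : SimpleGraph (BSQVertex n) :=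
  SimpleGraph.fromRel (fun u v => bsqRel ((n - 2) / 4) u.1 v.1)

/-! ### Auxiliary machinery -/

/-- The vertex of `BSQ 6` with bits those of the natural number `m`. -/
def vtx (m : ℕ) : BSQVertex 6 :=
  ⟨fun i => decide (i < 6) && m.testBit i, fun i hi => by
    simp [Nat.not_lt.mpr hi]⟩

lemma vtx_apply (m i : ℕ) :
    (vtx m).1 i = (decide (i < 6) && decide (m / 2 ^ i % 2 = 1)) := by
  simp [vtx, Nat.testBit_eq_decide_div_mod_eq]

/-- Numeric counterpart of `bsqRel 1` on bit-vectors of length 6. -/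
def Rnat (a b : ℕ) : Prop :=
  (a / 4 = b / 4 ∧ (a % 2 = b % 2 ↔ ¬ (a / 2 % 2 = b / 2 % 2))) ∨
  (a % 4 = b % 4 ∧ ¬ (a / 16 % 2 = b / 16 % 2) ∧
    (b / 16 % 4 = (a / 16 % 4 + 1) % 4 ∨ b / 16 % 4 = (a / 16 % 4 + 3) % 4) ∧
    (b / 4 % 4 = (a / 4 % 4 + (if a / 16 % 2 = 1 then 3 else 1)) % 4 ∨
      b / 4 % 4 = a / 4 % 4))

instance (a b : ℕ) : Decidable (Rnat a b) :=
  inferInstanceAs (Decidable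
    ((a / 4 = b / 4 ∧ (a % 2 = b % 2 ↔ ¬ (a / 2 % 2 = b / 2 % 2))) ∨
    (a % 4 = b % 4 ∧ ¬ (a / 16 % 2 = b / 16 % 2) ∧
      (b / 16 % 4 = (a / 16 % 4 + 1) % 4 ∨ b / 16 % 4 = (a / 16 % 4 + 3) % 4) ∧
      (b / 4 % 4 = (a / 4 % 4 + (if a / 16 % 2 = 1 then 3 else 1)) % 4 ∨
        b / 4 % 4 = a / 4 % 4))))

/-- Numeric counterpart of the adjacency relation of `BSQ 6`. -/
def Anat (a b : ℕ) : Prop :=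
  a < 64 ∧ b < 64 ∧ a ≠ b ∧ (Rnat a b ∨ Rnat b a)

instance (a b : ℕ) : Decidable (Anat a b) :=
  inferInstanceAs (Decidable (a < 64 ∧ b < 64 ∧ a ≠ b ∧ (Rnat a b ∨ Rnat b a)))

lemma pv_nat (a : ℕ) :
    pairVal (decide (a / 2 % 2 = 1)) (decide (a % 2 = 1)) = ((a % 4 : ℕ) : ZMod 4) := by
  have h2 : a % 2 = a % 4 % 2 := by omega
  have h1 : a / 2 % 2 = a % 4 / 2 % 2 := by omega
  rw [h2, h1]
  have h : a % 4 < 4 := by omega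
  generalize a % 4 = b at h ⊢
  interval_cases b <;> decide

lemma pv54 (m : ℕ) :
    pairVal (decide (m / 32 % 2 = 1)) (decide (m / 16 % 2 = 1))
      = ((m / 16 % 4 : ℕ) : ZMod 4) := by
  have h1 : m / 32 % 2 = (m / 16) / 2 % 2 := by omega
  have h2 : m / 16 % 2 = (m / 16) % 2 := rfl
  rw [h1, h2, pv_nat]

lemma pv32 (m : ℕ) :
    pairVal (decide (m / 8 % 2 = 1)) (decide (m / 4 % 2 = 1))
      = ((m / 4 % 4 : ℕ) : ZMod 4) := by
  have h1 : m / 8 % 2 = (m / 4) / 2 % 2 := by omega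
  rw [h1, pv_nat]

lemma zc1 {x y : ℕ} (hx : x < 4) (h : y = (x + 1) % 4) :
    ((y : ℕ) : ZMod 4) = ((x : ℕ) : ZMod 4) + 1 := by
  subst h; interval_cases x <;> decide

lemma zc3 {x y : ℕ} (hx : x < 4) (h : y = (x + 3) % 4) :
    ((y : ℕ) : ZMod 4) = ((x : ℕ) : ZMod 4) + (-1) := by
  subst h; interval_cases x <;> decide

/-- The key bridge: the numeric relation implies the abstract relation. -/
lemma bsq_of_R {a b : ℕ} (h : Rnat a b) : bsqRel 1 (vtx a).1 (vtx b).1 := by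
  show bsqRel (0 + 1) (vtx a).1 (vtx b).1
  simp only [bsqRel]
  rcases h with ⟨h1, h2⟩ | ⟨h1, h2, h3, h4⟩
  · left
    constructor
    · intro i hi1 hi2
      have hi2' : i ≤ 4 * 0 + 5 := hi2
      interval_cases i <;>
        · simp only [vtx_apply]
          norm_num
          omega
    · simp only [vtx_apply]
      norm_num
      omega
  · right
    refine ⟨?_, ?_, ?_, ?_⟩
    · intro i hi
      interval_cases i <;>
        · simp only [vtx_apply]
          norm_num
          omega
    · simp only [vtx_apply]
      norm_num
      omega
    · simp only [vtx_apply]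
      norm_num
      rw [pv54, pv54]
      have hx : a / 16 % 4 < 4 := by omega
      rcases h3 with h3 | h3
      · exact Or.inl (zc1 hx h3)
      · right
        rw [sub_eq_add_neg]
        exact zc3 hx h3
    · simp only [vtx_apply]
      norm_num
      rw [pv32, pv32]
      have hx : a / 4 % 4 < 4 := by omega
      by_cases h16 : a / 16 % 2 = 1
      · rw [if_pos h16] at h4
        rw [if_pos (by simp [h16])]
        rcases h4 with h4 | h4
        · exact Or.inl (zc3 hx h4)
        · exact Or.inr (by rw [h4])
      · rw [if_neg h16] at h4
        rw [if_neg (by simp [h16])]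
        rcases h4 with h4 | h4
        · exact Or.inl (zc1 hx h4)
        · exact Or.inr (by rw [h4])

lemma vtx_inj {a b : ℕ} (ha : a < 64) (hb : b < 64) (h : vtx a = vtx b) : a = b := by
  have h' : ∀ i, (vtx a).1 i = (vtx b).1 i := fun i => by rw [h]
  have e : ∀ i, i < 6 → (a / 2 ^ i % 2 = 1 ↔ b / 2 ^ i % 2 = 1) := by
    intro i hi
    have hthis := h' i
    have h6 : decide (i < 6) = true := by simpa using hi
    rw [vtx_apply, vtx_apply, h6, Bool.true_and, Bool.true_and] at hthis
    exact decide_eq_decide.mp hthis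
  have e0 := e 0 (by norm_num)
  have e1 := e 1 (by norm_num)
  have e2 := e 2 (by norm_num)
  have e3 := e 3 (by norm_num)
  have e4 := e 4 (by norm_num)
  have e5 := e 5 (by norm_num)
  norm_num at e0 e1 e2 e3 e4 e5
  have f0 : a % 2 = b % 2 := by clear e1 e2 e3 e4 e5; omega
  have f1 : a / 2 % 2 = b / 2 % 2 := by clear e0 e2 e3 e4 e5; omega
  have f2 : a / 4 % 2 = b / 4 % 2 := by clear e0 e1 e3 e4 e5; omega
  have f3 : a / 8 % 2 = b / 8 % 2 := by clear e0 e1 e2 e4 e5; omega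
  have f4 : a / 16 % 2 = b / 16 % 2 := by clear e0 e1 e2 e3 e5; omega
  have f5 : a / 32 % 2 = b / 32 % 2 := by clear e0 e1 e2 e3 e4; omega
  clear e0 e1 e2 e3 e4 e5
  omega

lemma anat_adj {a b : ℕ} (h : Anat a b) : (BSQ 6).Adj (vtx a) (vtx b) := by
  obtain ⟨ha, hb, hne, hr⟩ := h
  rw [BSQ, SimpleGraph.fromRel_adj]
  refine ⟨fun hv => hne (vtx_inj ha hb hv), ?_⟩
  have : (6 - 2) / 4 = 1 := by norm_num
  rw [this]
  rcases hr with hr | hr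
  · exact Or.inl (bsq_of_R hr)
  · exact Or.inr (bsq_of_R hr)

lemma decide_toNat_eq (b : Bool) (x : ℕ) (h : x = b.toNat) : decide (x = 1) = b := by
  subst h; cases b <;> simp

lemma vtx_surj (u : BSQVertex 6) : ∃ m, m < 64 ∧ vtx m = u := by
  obtain ⟨f, hf⟩ := u
  have hb : ∀ b : Bool, b.toNat ≤ 1 := fun b => by cases b <;> simp
  refine ⟨(f 0).toNat + 2 * (f 1).toNat + 4 * (f 2).toNat + 8 * (f 3).toNat
      + 16 * (f 4).toNat + 32 * (f 5).toNat, ?_, ?_⟩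
  · have := hb (f 0); have := hb (f 1); have := hb (f 2)
    have := hb (f 3); have := hb (f 4); have := hb (f 5)
    omega
  · apply Subtype.ext
    funext i
    by_cases hi : i < 6
    · have b0 := hb (f 0); have b1 := hb (f 1); have b2 := hb (f 2)
      have b3 := hb (f 3); have b4 := hb (f 4); have b5 := hb (f 5)
      interval_cases i <;>
        · rw [vtx_apply]
          norm_num
          exact decide_toNat_eq _ _ (by omega)
    · rw [vtx_apply]
      simp [hf i (by omega), hi]
/-! ### Building cycles from vertex lists -/

open SimpleGraph List

def buildWalk {V : Type} (G : SimpleGraph V) :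
    (a : V) → (L : List V) → (b : V) → List.Chain G.Adj a (L ++ [b]) → G.Walk a b
  | _, [], _, h => Walk.cons (List.rel_of_chain_cons h) Walk.nil
  | _, c :: L, b, h =>
      Walk.cons (List.rel_of_chain_cons h) (buildWalk G c L b (List.chain_of_chain_cons h))

lemma buildWalk_support {V : Type} (G : SimpleGraph V) :
    ∀ (a : V) (L : List V) (b : V) (h : List.Chain G.Adj a (L ++ [b])),
      (buildWalk G a L b h).support = a :: (L ++ [b])
  | _, [], _, _ => rfl
  | a, c :: L, b, h => by
      simp [buildWalk, buildWalk_support G c L b (List.chain_of_chain_cons h)]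

lemma buildWalk_length {V : Type} (G : SimpleGraph V) :
    ∀ (a : V) (L : List V) (b : V) (h : List.Chain G.Adj a (L ++ [b])),
      (buildWalk G a L b h).length = L.length + 1
  | _, [], _, _ => rfl
  | a, c :: L, b, h => by
      simp [buildWalk, buildWalk_length G c L b (List.chain_of_chain_cons h)]

lemma exists_cycle_of_list {V : Type} {G : SimpleGraph V} (m : V) (L : List V)
    (hc : List.Chain G.Adj m (L ++ [m])) (hn : (m :: L).Nodup) (hl : 2 ≤ L.length) :
    ∃ c : G.Walk m m, c.IsCycle ∧ c.length = L.length + 1 := by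
  match L, hl with
  | c :: d :: L', _ =>
    have hadj : G.Adj m c := List.rel_of_chain_cons hc
    have hc1 : List.Chain G.Adj c ((d :: L') ++ [m]) := List.chain_of_chain_cons hc
    set p : G.Walk c m := buildWalk G c (d :: L') m hc1 with hp
    have hsup : p.support = c :: (d :: L' ++ [m]) := buildWalk_support G c (d :: L') m hc1
    -- facts from nodup
    simp only [List.nodup_cons, List.mem_cons, not_or] at hn
    obtain ⟨⟨hmc, hmd, hmL⟩, ⟨hcd1, hcL⟩, hdL, hLnd⟩ := hn
    have h2 : ((d :: L') ++ [m]).Nodup := by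
      rw [List.nodup_append_comm]
      simp only [List.singleton_append, List.nodup_cons, List.mem_cons, not_or]
      exact ⟨⟨hmd, hmL⟩, hdL, hLnd⟩
    have hpath : p.IsPath := by
      rw [Walk.isPath_def, hsup]
      refine List.nodup_cons.mpr ⟨?_, h2⟩
      simp only [List.cons_append, List.mem_cons, List.mem_append, List.mem_singleton, not_or]
      exact ⟨hcd1, hcL, fun h => hmc h.symm, List.not_mem_nil⟩
    have hedge : s(m, c) ∉ p.edges := by
      intro hmem
      -- p = cons (c~d) q
      rw [hp] at hmem
      simp only [buildWalk, Walk.edges_cons, List.mem_cons] at hmem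
      rcases hmem with hmem | hmem
      · rw [Sym2.eq_iff] at hmem
        rcases hmem with ⟨h1, _⟩ | ⟨h1, h2⟩
        · exact hmc h1
        · exact hmd h1
      · have hcsup : c ∈ (buildWalk G d L' m (List.chain_of_chain_cons hc1)).support :=
          Walk.snd_mem_support_of_mem_edges _ hmem
        erw [buildWalk_support] at hcsup
        simp only [List.mem_cons, List.mem_append, List.mem_singleton] at hcsup
        rcases hcsup with h1 | h1 | h1 | h1
        · exact hcd1 h1
        · exact hcL h1
        · exact hmc h1.symm
        · exact List.not_mem_nil h1
    refine ⟨Walk.cons hadj p, ?_, ?_⟩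
    · rw [SimpleGraph.Walk.cons_isCycle_iff]
      exact ⟨hpath, hedge⟩
    · simp [Walk.length_cons, hp, buildWalk_length]
/-! ### Automorphisms: vertex-transitivity -/

/-- `pair54 += 1`, `pair32 ↦ -pair32`. -/
def sigNat (m : ℕ) : ℕ :=
  m % 4 + 4 * ((4 - m / 4 % 4) % 4) + 16 * ((m / 16 + 1) % 4)

/-- `pair32 += 1`. -/
def tauNat (m : ℕ) : ℕ :=
  m % 4 + 4 * ((m / 4 % 4 + 1) % 4) + 16 * (m / 16)

def IsGood (f : ℕ → ℕ) : Prop :=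
  (∀ a, a < 64 → f a < 64) ∧ (∀ a b, Anat a b → Anat (f a) (f b)) ∧
    (∀ a b, a < 64 → b < 64 → f a = f b → a = b)

lemma good_id : IsGood id := ⟨fun a ha => ha, fun _ _ h => h, fun _ _ _ _ h => h⟩

lemma good_comp {f g : ℕ → ℕ} (hf : IsGood f) (hg : IsGood g) : IsGood (g ∘ f) :=
  ⟨fun a ha => hg.1 _ (hf.1 a ha), fun a b h => hg.2.1 _ _ (hf.2.1 a b h),
   fun a b ha hb h => hf.2.2 a b ha hb (hg.2.2 _ _ (hf.1 a ha) (hf.1 b hb) h)⟩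

lemma good_iter {f : ℕ → ℕ} (hf : IsGood f) : ∀ n, IsGood f^[n]
  | 0 => good_id
  | n + 1 => by
      rw [Function.iterate_succ]
      exact good_comp hf (good_iter hf n)

lemma anat_bounds {a b : ℕ} (h : Anat a b) : a < 64 ∧ b < 64 := ⟨h.1, h.2.1⟩

lemma good_sig : IsGood sigNat := by
  refine ⟨?_, ?_, ?_⟩
  · intro a ha
    revert ha
    revert a
    decide
  · intro a b h
    have hb := anat_bounds h
    revert h
    have key : ∀ a < 64, ∀ b < 64, Anat a b → Anat (sigNat a) (sigNat b) := by decide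
    exact key a hb.1 b hb.2
  · intro a b ha hb
    revert ha hb
    have key : ∀ a < 64, ∀ b < 64, sigNat a = sigNat b → a = b := by decide
    intro ha hb
    exact key a ha b hb

lemma good_tau : IsGood tauNat := by
  refine ⟨?_, ?_, ?_⟩
  · intro a ha
    revert a ha
    decide
  · intro a b h
    have hb := anat_bounds h
    revert h
    have key : ∀ a < 64, ∀ b < 64, Anat a b → Anat (tauNat a) (tauNat b) := by decide
    exact key a hb.1 b hb.2
  · intro a b ha hb
    have key : ∀ a < 64, ∀ b < 64, tauNat a = tauNat b → a = b := by decide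
    exact key a ha b hb

lemma good_xor {c : ℕ} (hc : c < 4) : IsGood (· ^^^ c) := by
  refine ⟨?_, ?_, ?_⟩
  · have key : ∀ c < 4, ∀ a < 64, a ^^^ c < 64 := by decide
    intro a ha
    exact key c hc a ha
  · intro a b h
    have hb := anat_bounds h
    revert h
    have key : ∀ c < 4, ∀ a < 64, ∀ b < 64, Anat a b → Anat (a ^^^ c) (b ^^^ c) := by decide
    exact key c hc a hb.1 b hb.2
  · intro a b ha hb h
    have h' : a ^^^ c = b ^^^ c := h
    have : a ^^^ c ^^^ c = b ^^^ c ^^^ c := by rw [h']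
    simpa [xor_cancel_right] using this

/-- The automorphism sending `0` to `m`. -/
def Fmap (m : ℕ) (x : ℕ) : ℕ :=
  (tauNat^[m / 4 % 4] (sigNat^[m / 16] x)) ^^^ (m % 4)

lemma good_F (m : ℕ) (hm : m < 64) : IsGood (Fmap m) := by
  have h1 : IsGood (sigNat^[m / 16]) := good_iter good_sig _
  have h2 : IsGood (tauNat^[m / 4 % 4]) := good_iter good_tau _
  have h3 : IsGood (· ^^^ (m % 4)) := good_xor (by omega)
  exact good_comp (good_comp h1 h2) h3

lemma F_zero : ∀ m < 64, Fmap m 0 = m := by decide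

/-! ### Main auxiliary lemma -/

/-- Structurally decidable chain condition. -/
def chainOk : ℕ → List ℕ → Prop
  | _, [] => True
  | a, b :: L => Anat a b ∧ chainOk b L

instance chainOkDec : ∀ (a : ℕ) (L : List ℕ), Decidable (chainOk a L)
  | _, [] => isTrue trivial
  | a, b :: L =>
      haveI := chainOkDec b L
      inferInstanceAs (Decidable (Anat a b ∧ chainOk b L))

lemma chainOk_chain : ∀ (a : ℕ) (L : List ℕ), chainOk a L → List.Chain Anat a L
  | _, [], _ => List.Chain.nil
  | a, b :: L, h => List.Chain.cons h.1 (chainOk_chain b L h.2)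

lemma main_aux (m : ℕ) (hm : m < 64) (L : List ℕ) (l : ℕ)
    (h1 : chainOk 0 (L ++ [0])) (h2 : (0 :: L).Nodup)
    (h3 : ∀ x ∈ L, x < 64)
    (h4 : L.length + 1 = l) (h5 : 2 ≤ L.length) :
    ∃ c : (BSQ 6).Walk (vtx m) (vtx m), c.IsCycle ∧ c.length = l := by
  have hg := good_F m hm
  have hF0 : Fmap m 0 = m := F_zero m hm
  have h3' : ∀ x ∈ (0 : ℕ) :: L, x < 64 := by
    intro x hx
    rcases List.mem_cons.mp hx with h | h
    · omega
    · exact h3 x h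
  -- map the chain by `Fmap m`
  have chain2 : List.Chain Anat (Fmap m 0) ((L ++ [0]).map (Fmap m)) :=
    List.isChain_map_of_isChain (Fmap m) (fun a b h => hg.2.1 a b h) (chainOk_chain _ _ h1)
  rw [hF0, List.map_append] at chain2
  -- map by vtx
  have chain3 : List.Chain (BSQ 6).Adj (vtx m) ((map (Fmap m) L ++ map (Fmap m) [0]).map vtx) :=
    List.isChain_map_of_isChain vtx (fun a b h => anat_adj h) chain2
  rw [List.map_append] at chain3
  simp only [List.map_cons, List.map_nil, hF0] at chain3
  -- nodup
  have n1 : ((( 0 :: L).map (Fmap m)).map vtx).Nodup := by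
    refine List.Nodup.map_on ?_ (List.Nodup.map_on ?_ h2)
    · intro x hx y hy hxy
      rcases List.mem_map.mp hx with ⟨x', hx', rfl⟩
      rcases List.mem_map.mp hy with ⟨y', hy', rfl⟩
      exact vtx_inj (hg.1 _ (h3' x' hx')) (hg.1 _ (h3' y' hy')) hxy ▸ rfl
    · intro x hx y hy hxy
      exact hg.2.2 x y (h3' x hx) (h3' y hy) hxy
  simp only [List.map_cons, hF0] at n1
  obtain ⟨c, hc, hlen⟩ := exists_cycle_of_list (G := BSQ 6) (vtx m)
    ((L.map (Fmap m)).map vtx) chain3 n1 (by simpa using h5)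
  refine ⟨c, hc, ?_⟩
  rw [hlen]
  simpa using h4

/-- The balanced shuffle-cube `BSQ₆` is vertex-bipancyclic: every vertex lies
on a cycle of every even length `l` with `4 ≤ l ≤ 64`. -/
theorem bsq6_vertexBipancyclic (u : BSQVertex 6) (l : ℕ) (hl : 4 ≤ l)
    (hl' : l ≤ 64) (hev : Even l) :
    ∃ c : (BSQ 6).Walk u u, c.IsCycle ∧ c.length = l := by
  obtain ⟨m, hm, rfl⟩ := vtx_surj u
  have hev2 : l % 2 = 0 := Nat.even_iff.mp hev
  interval_cases l
  · exact main_aux m hm [48, 49, 1] 4 (by decide) (by decide) (by decide) (by decide) (by decide)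
  · exact absurd hev2 (by norm_num)
  · exact main_aux m hm [48, 49, 51, 50, 2] 6 (by decide) (by decide) (by decide) (by decide) (by decide)
  · exact absurd hev2 (by norm_num)
  · exact main_aux m hm [48, 49, 51, 50, 46, 18, 16] 8 (by decide) (by decide) (by decide) (by decide) (by decide)
  · exact absurd hev2 (by norm_num)
  · exact main_aux m hm [48, 49, 51, 50, 46, 30, 14, 12, 16] 10 (by decide) (by decide) (by decide) (by decide) (by decide)
  · exact absurd hev2 (by norm_num)
  · exact main_aux m hm [48, 49, 51, 50, 46, 30, 10, 26, 24, 36, 20] 12 (by decide) (by decide) (by decide) (by decide) (by decide)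
  · exact absurd hev2 (by norm_num)
  · exact main_aux m hm [48, 49, 51, 50, 46, 30, 10, 26, 24, 8, 56, 4, 20] 14 (by decide) (by decide) (by decide) (by decide) (by decide)
  · exact absurd hev2 (by norm_num)
  · exact main_aux m hm [48, 49, 51, 50, 46, 30, 10, 26, 24, 8, 56, 58, 6, 54, 52] 16 (by decide) (by decide) (by decide) (by decide) (by decide)
  · exact absurd hev2 (by norm_num)
  · exact main_aux m hm [48, 49, 51, 50, 46, 30, 10, 26, 24, 8, 56, 58, 42, 62, 14, 18, 2] 18 (by decide) (by decide) (by decide) (by decide) (by decide)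
  · exact absurd hev2 (by norm_num)
  · exact main_aux m hm [48, 49, 51, 50, 46, 30, 10, 26, 24, 8, 56, 58, 42, 43, 31, 47, 19, 18, 16] 20 (by decide) (by decide) (by decide) (by decide) (by decide)
  · exact absurd hev2 (by norm_num)
  · exact main_aux m hm [48, 49, 51, 50, 46, 30, 10, 26, 24, 8, 56, 58, 42, 43, 31, 47, 63, 61, 13, 12, 16] 22 (by decide) (by decide) (by decide) (by decide) (by decide)
  · exact absurd hev2 (by norm_num)
  · exact main_aux m hm [48, 49, 51, 50, 46, 30, 10, 26, 24, 8, 56, 58, 42, 43, 31, 47, 63, 11, 9, 29, 45, 44, 16] 24 (by decide) (by decide) (by decide) (by decide) (by decide)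
  · exact absurd hev2 (by norm_num)
  · exact main_aux m hm [48, 49, 51, 50, 46, 30, 10, 26, 24, 8, 56, 58, 42, 43, 31, 47, 63, 11, 9, 29, 45, 61, 60, 44, 16] 26 (by decide) (by decide) (by decide) (by decide) (by decide)
  · exact absurd hev2 (by norm_num)
  · exact main_aux m hm [48, 49, 51, 50, 46, 30, 10, 26, 24, 8, 56, 58, 42, 43, 31, 47, 63, 11, 9, 29, 45, 61, 60, 44, 28, 12, 16] 28 (by decide) (by decide) (by decide) (by decide) (by decide)
  · exact absurd hev2 (by norm_num)
  · exact main_aux m hm [48, 49, 51, 50, 46, 30, 10, 26, 24, 8, 56, 58, 42, 43, 31, 47, 63, 11, 9, 29, 45, 61, 60, 44, 28, 12, 16, 18, 2] 30 (by decide) (by decide) (by decide) (by decide) (by decide)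
  · exact absurd hev2 (by norm_num)
  · exact main_aux m hm [48, 49, 51, 50, 46, 30, 10, 26, 24, 8, 56, 58, 42, 43, 31, 47, 63, 11, 9, 29, 45, 61, 60, 44, 28, 12, 16, 18, 19, 17, 1] 32 (by decide) (by decide) (by decide) (by decide) (by decide)
  · exact absurd hev2 (by norm_num)
  · exact main_aux m hm [48, 49, 51, 50, 46, 30, 10, 26, 24, 8, 56, 58, 42, 43, 31, 47, 63, 11, 9, 29, 45, 61, 60, 44, 28, 12, 16, 18, 19, 15, 13, 17, 1] 34 (by decide) (by decide) (by decide) (by decide) (by decide)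
  · exact absurd hev2 (by norm_num)
  · exact main_aux m hm [48, 49, 51, 50, 46, 30, 10, 26, 24, 8, 56, 58, 42, 43, 31, 47, 63, 11, 9, 29, 45, 61, 60, 44, 28, 12, 16, 18, 19, 15, 13, 17, 33, 53, 52] 36 (by decide) (by decide) (by decide) (by decide) (by decide)
  · exact absurd hev2 (by norm_num)
  · exact main_aux m hm [48, 49, 51, 50, 46, 30, 10, 26, 24, 8, 56, 58, 42, 43, 31, 47, 63, 11, 9, 29, 45, 61, 60, 44, 28, 12, 16, 18, 19, 15, 13, 17, 33, 53, 5, 21, 1] 38 (by decide) (by decide) (by decide) (by decide) (by decide)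
  · exact absurd hev2 (by norm_num)
  · exact main_aux m hm [48, 49, 51, 50, 46, 30, 10, 26, 24, 8, 56, 58, 42, 43, 31, 47, 63, 11, 9, 29, 45, 61, 60, 44, 28, 12, 16, 18, 19, 15, 13, 17, 33, 53, 5, 57, 37, 21, 20] 40 (by decide) (by decide) (by decide) (by decide) (by decide)
  · exact absurd hev2 (by norm_num)
  · exact main_aux m hm [48, 49, 51, 50, 46, 30, 10, 26, 24, 8, 56, 58, 42, 43, 31, 47, 63, 11, 9, 29, 45, 61, 60, 44, 28, 12, 16, 18, 19, 15, 13, 17, 33, 53, 5, 57, 41, 25, 37, 21, 20] 42 (by decide) (by decide) (by decide) (by decide) (by decide)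
  · exact absurd hev2 (by norm_num)
  · exact main_aux m hm [48, 49, 51, 50, 46, 30, 10, 26, 24, 8, 56, 58, 42, 43, 31, 47, 63, 11, 9, 29, 45, 61, 60, 44, 28, 12, 16, 18, 19, 15, 13, 17, 33, 53, 5, 57, 41, 25, 37, 21, 20, 22, 2] 44 (by decide) (by decide) (by decide) (by decide) (by decide)
  · exact absurd hev2 (by norm_num)
  · exact main_aux m hm [48, 49, 51, 50, 46, 30, 10, 26, 24, 8, 56, 58, 42, 43, 31, 47, 63, 11, 9, 29, 45, 61, 60, 44, 28, 12, 16, 18, 19, 15, 13, 17, 33, 53, 5, 57, 41, 25, 37, 21, 20, 22, 2, 3, 1] 46 (by decide) (by decide) (by decide) (by decide) (by decide)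
  · exact absurd hev2 (by norm_num)
  · exact main_aux m hm [48, 49, 51, 50, 46, 30, 10, 26, 24, 8, 56, 58, 42, 43, 31, 47, 63, 11, 9, 29, 45, 61, 60, 44, 28, 12, 16, 18, 19, 15, 13, 17, 33, 53, 5, 57, 41, 25, 37, 21, 20, 22, 2, 3, 55, 54, 52] 48 (by decide) (by decide) (by decide) (by decide) (by decide)
  · exact absurd hev2 (by norm_num)
  · exact main_aux m hm [48, 49, 51, 50, 46, 30, 10, 26, 24, 8, 56, 58, 42, 43, 31, 47, 63, 11, 9, 29, 45, 61, 60, 44, 28, 12, 16, 18, 19, 15, 13, 17, 33, 53, 5, 57, 41, 25, 37, 21, 20, 22, 2, 3, 55, 7, 6, 54, 52] 50 (by decide) (by decide) (by decide) (by decide) (by decide)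
  · exact absurd hev2 (by norm_num)
  · exact main_aux m hm [48, 49, 51, 50, 46, 30, 10, 26, 24, 8, 56, 58, 42, 43, 31, 47, 63, 11, 9, 29, 45, 61, 60, 44, 28, 12, 16, 18, 19, 15, 13, 17, 33, 53, 5, 57, 41, 25, 37, 21, 20, 22, 2, 3, 55, 7, 59, 39, 38, 54, 52] 52 (by decide) (by decide) (by decide) (by decide) (by decide)
  · exact absurd hev2 (by norm_num)
  · exact main_aux m hm [48, 49, 51, 50, 46, 30, 10, 26, 24, 8, 56, 58, 42, 43, 31, 47, 63, 11, 9, 29, 45, 61, 60, 44, 28, 12, 16, 18, 19, 15, 13, 17, 33, 53, 5, 57, 41, 25, 37, 21, 20, 22, 2, 3, 55, 7, 59, 39, 38, 54, 6, 4, 52] 54 (by decide) (by decide) (by decide) (by decide) (by decide)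
  · exact absurd hev2 (by norm_num)
  · exact main_aux m hm [48, 49, 51, 50, 46, 30, 10, 26, 24, 8, 56, 58, 42, 43, 31, 47, 63, 11, 9, 29, 45, 61, 60, 44, 28, 12, 16, 18, 19, 15, 13, 17, 33, 53, 5, 57, 41, 25, 37, 21, 20, 22, 2, 3, 55, 7, 59, 39, 23, 35, 34, 54, 38, 36, 52] 56 (by decide) (by decide) (by decide) (by decide) (by decide)
  · exact absurd hev2 (by norm_num)
  · exact main_aux m hm [48, 49, 51, 50, 46, 30, 10, 26, 24, 8, 56, 58, 42, 43, 31, 47, 63, 11, 9, 29, 45, 61, 60, 44, 28, 12, 16, 18, 19, 15, 13, 17, 33, 53, 5, 57, 41, 25, 37, 21, 20, 22, 2, 54, 55, 39, 27, 7, 6, 4, 52, 32, 34, 35, 23, 3, 1] 58 (by decide) (by decide) (by decide) (by decide) (by decide)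
  · exact absurd hev2 (by norm_num)
  · exact main_aux m hm [48, 49, 51, 50, 46, 30, 10, 26, 24, 8, 56, 58, 42, 43, 31, 47, 63, 11, 9, 29, 45, 61, 60, 44, 28, 12, 16, 18, 19, 15, 13, 17, 33, 53, 5, 57, 41, 25, 37, 21, 20, 32, 34, 54, 6, 4, 52, 36, 38, 39, 27, 7, 55, 35, 23, 22, 2, 3, 1] 60 (by decide) (by decide) (by decide) (by decide) (by decide)
  · exact absurd hev2 (by norm_num)
  · exact main_aux m hm [16, 12, 60, 62, 63, 43, 59, 58, 56, 40, 28, 8, 24, 4, 20, 36, 38, 39, 23, 3, 55, 35, 19, 18, 2, 22, 34, 54, 52, 53, 33, 49, 51, 47, 45, 61, 9, 29, 31, 11, 27, 25, 41, 57, 37, 21, 5, 7, 6, 26, 42, 30, 46, 44, 48, 50, 14, 15, 13, 17, 1] 62 (by decide) (by decide) (by decide) (by decide) (by decide)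
  · exact absurd hev2 (by norm_num)
  · exact main_aux m hm [1, 3, 51, 35, 19, 18, 34, 22, 38, 54, 2, 50, 14, 15, 31, 29, 28, 12, 13, 17, 16, 44, 46, 30, 10, 8, 60, 40, 24, 36, 52, 4, 5, 7, 27, 26, 6, 58, 56, 57, 9, 11, 59, 43, 42, 62, 63, 47, 45, 61, 41, 25, 37, 21, 23, 39, 55, 53, 33, 49, 48, 32, 20] 64 (by decide) (by decide) (by decide) (by decide) (by decide)
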